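/- For all real numbers x, y and every real r > 0, setting u = √((x−1)² + y²), v = √(x² + (y+1)²), a = x + y and c = x − y − 1, one has |r − u| − |r − v| ≤ 0 if and only if a + (r/√2)·(√((a−1)² + c²) − √((a+1)² + c²)) ≥ 0. (This is the exact simplification of the cost function of the signum algorithm: the sign of Δ = |r − u| − |r − v| is opposite to the sign of a + (r/√2)(√((a−1)²+c²) − √((a+1)²+c²)).) -/

import Mathlib

/-- Exact simplification of the cost function of the signum algorithm:
for `r > 0` and any reals `x, y`, with `a = x + y` and `c = x - y - 1`,
the cost `Δ = |r - √((x-1)² + y²)| - |r - √(x² + (y+1)²)|` satisfies `Δ ≤ 0`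
if and only if `a + (r/√2)·(√((a-1)² + c²) - √((a+1)² + c²)) ≥ 0`. -/
theorem cost_nonpos_iff (x y r : ℝ) (hr : 0 < r) :
    |r - Real.sqrt ((x - 1) ^ 2 + y ^ 2)| - |r - Real.sqrt (x ^ 2 + (y + 1) ^ 2)| ≤ 0 ↔
      0 ≤ (x + y) + (r / Real.sqrt 2) *
        (Real.sqrt (((x + y) - 1) ^ 2 + (x - y - 1) ^ 2) -
          Real.sqrt (((x + y) + 1) ^ 2 + (x - y - 1) ^ 2)) := by
  set u := Real.sqrt ((x - 1) ^ 2 + y ^ 2) with hu_def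
  set v := Real.sqrt (x ^ 2 + (y + 1) ^ 2) with hv_def
  have hu0 : 0 ≤ u := Real.sqrt_nonneg _
  have hv0 : 0 ≤ v := Real.sqrt_nonneg _
  have hu2 : u ^ 2 = (x - 1) ^ 2 + y ^ 2 := Real.sq_sqrt (by positivity)
  have hv2 : v ^ 2 = x ^ 2 + (y + 1) ^ 2 := Real.sq_sqrt (by positivity)
  have hs2 : (0:ℝ) < Real.sqrt 2 := Real.sqrt_pos.mpr (by norm_num)
  have h1 : Real.sqrt (((x + y) - 1) ^ 2 + (x - y - 1) ^ 2) = Real.sqrt 2 * u := by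
    rw [hu_def, ← Real.sqrt_mul (by norm_num : (0:ℝ) ≤ 2)]
    ring_nf
  have h2 : Real.sqrt (((x + y) + 1) ^ 2 + (x - y - 1) ^ 2) = Real.sqrt 2 * v := by
    rw [hv_def, ← Real.sqrt_mul (by norm_num : (0:ℝ) ≤ 2)]
    ring_nf
  rw [h1, h2]
  have hrs : r / Real.sqrt 2 * (Real.sqrt 2 * u - Real.sqrt 2 * v) = r * (u - v) := by
    field_simp
  rw [hrs]
  have key : |r - u| - |r - v| ≤ 0 ↔ (r - u) ^ 2 ≤ (r - v) ^ 2 := by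
    rw [sub_nonpos, ← sq_abs (r - u), ← sq_abs (r - v)]
    constructor
    · intro h; nlinarith [abs_nonneg (r - u), abs_nonneg (r - v)]
    · intro h; nlinarith [abs_nonneg (r - u), abs_nonneg (r - v)]
  rw [key]
  constructor
  · intro h; nlinarith
  · intro h; nlinarith
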